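/- Let G be a group, A a finite set, and X ⊆ A^G a subshift in which the set of periodic configurations is dense. If the shift action of G on X is faithful (i.e., for every g ≠ 1 in G there exists x ∈ X with g·x ≠ x), then G is residually finite. -/

import Mathlib

/-- The shift action of a group `G` on configurations `x : G → A`:
`(g • x)(h) = x(g⁻¹h)`. -/
def shift {G A : Type*} [Group G] (g : G) (x : G → A) : G → A :=
  fun h => x (g⁻¹ * h)

/-- A subshift is a closed, shift-invariant subset of `A^G` (with the prodiscrete topology). -/
def IsSubshift {G A : Type*} [Group G] [TopologicalSpace A] (X : Set (G → A)) : Prop :=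
  IsClosed X ∧ ∀ (g : G) (x : G → A), x ∈ X → shift g x ∈ X

/-- A configuration is periodic if its orbit under the shift action is finite. -/
def IsPeriodicConfig {G A : Type*} [Group G] (x : G → A) : Prop :=
  (Set.range fun g : G => shift g x).Finite

/-- A subshift is of finite type if it is defined by a finite window `Ω` and a set of
allowed patterns `P ⊆ A^Ω`. -/
def IsOfFiniteType {G A : Type*} [Group G] (X : Set (G → A)) : Prop :=
  ∃ (Ω : Finset G) (P : Set ({g : G // g ∈ Ω} → A)),
    X = {x : G → A | ∀ g : G, (fun w : {g : G // g ∈ Ω} => shift g x w.1) ∈ P}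

/-- A subshift is strongly irreducible if there is a finite `Δ ⊆ G` such that any two
patterns of configurations of `X` with supports `Ω₁, Ω₂` satisfying `Ω₁Δ⁻¹ ∩ Ω₂ = ∅`
can be glued inside `X`. -/
def IsStronglyIrreducible {G A : Type*} [Group G] (X : Set (G → A)) : Prop :=
  ∃ Δ : Finset G, ∀ Ω₁ Ω₂ : Finset G,
    (∀ a ∈ Ω₁, ∀ d ∈ Δ, a * d⁻¹ ∉ Ω₂) →
    ∀ x₁ ∈ X, ∀ x₂ ∈ X, ∃ x ∈ X,
      (∀ w ∈ Ω₁, x w = x₁ w) ∧ (∀ w ∈ Ω₂, x w = x₂ w)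

/-- A group is residually finite if the intersection of its finite-index subgroups is
trivial, i.e. every nontrivial element avoids some finite-index subgroup. -/
def ResiduallyFinite (H : Type*) [Group H] : Prop :=
  ∀ h : H, h ≠ 1 → ∃ K : Subgroup H, K.FiniteIndex ∧ h ∉ K

/-- If `X ⊆ A^G` is a subshift with dense periodic configurations and the shift action
of `G` on `X` is faithful, then `G` is residually finite. -/
theorem residually_finite_of_faithful_dense_periodic
    {G A : Type*} [Group G] [Finite A] [TopologicalSpace A] [DiscreteTopology A]
    (X : Set (G → A)) (hX : IsSubshift X)
    (hdense : X ⊆ closure {x ∈ X | IsPeriodicConfig x})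
    (hfaithful : ∀ g : G, g ≠ 1 → ∃ x ∈ X, shift g x ≠ x) :
    ResiduallyFinite G := by
  intro g hg
  obtain ⟨x, hxX, hgx⟩ := hfaithful g hg
  obtain ⟨h, hh⟩ : ∃ h, x (g⁻¹ * h) ≠ x h := by
    by_contra hc
    push_neg at hc
    exact hgx (funext hc)
  -- find a periodic configuration agreeing with x at h and g⁻¹h
  have hU1 : IsOpen ((fun z : G → A => z (g⁻¹ * h)) ⁻¹' {x (g⁻¹ * h)}) :=
    (continuous_apply _).isOpen_preimage _ (isOpen_discrete _)
  have hU2 : IsOpen ((fun z : G → A => z h) ⁻¹' {x h}) :=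
    (continuous_apply _).isOpen_preimage _ (isOpen_discrete _)
  have hcl := hdense hxX
  rw [mem_closure_iff] at hcl
  obtain ⟨y, hyU, hyX, hyper⟩ :=
    hcl _ (hU1.inter hU2) ⟨rfl, rfl⟩
  obtain ⟨hy1, hy2⟩ := hyU
  simp only [Set.mem_preimage, Set.mem_singleton_iff] at hy1 hy2
  have shift_mul : ∀ (a b : G) (z : G → A), shift (a * b) z = shift a (shift b z) := by
    intro a b z; funext k; simp [shift, mul_assoc]
  let K : Subgroup G :=
    { carrier := {k | shift k y = y}
      one_mem' := by funext k; simp [shift]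
      mul_mem' := by
        intro a b ha hb
        show shift (a * b) y = y
        rw [shift_mul, hb, ha]
      inv_mem' := by
        intro a ha
        show shift a⁻¹ y = y
        have : shift a⁻¹ (shift a y) = y := by
          rw [← shift_mul]; funext k; simp [shift]
        rw [ha] at this; exact this }
  have hKmem : ∀ k : G, k ∈ K ↔ shift k y = y := fun _ => Iff.rfl
  haveI : Finite (Set.range fun k : G => shift k y) := hyper.to_subtype
  have key : ∀ a b : G, (QuotientGroup.leftRel K) a b → shift a y = shift b y := by
    intro a b hab
    rw [QuotientGroup.leftRel_apply] at hab
    have : shift b y = shift (a * (a⁻¹ * b)) y := by group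
    rw [this, shift_mul, (hKmem _).1 hab]
  let f : G ⧸ K → (Set.range fun k : G => shift k y) :=
    Quotient.lift (fun k => ⟨shift k y, ⟨k, rfl⟩⟩)
      (fun a b hab => Subtype.ext (key a b hab))
  have hf : Function.Injective f := by
    intro a b
    induction a using Quotient.inductionOn with | h a =>
    induction b using Quotient.inductionOn with | h b =>
    intro hab
    have hab' : shift a y = shift b y := congrArg Subtype.val hab
    have hm : a⁻¹ * b ∈ K := by
      show shift (a⁻¹ * b) y = y
      rw [shift_mul, ← hab', ← shift_mul]
      funext k; simp [shift]
    exact Quotient.sound (QuotientGroup.leftRel_apply.mpr hm)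
  haveI : Finite (G ⧸ K) := Finite.of_injective f hf
  refine ⟨K, Subgroup.finiteIndex_of_finite_quotient, ?_⟩
  intro hgK
  have : shift g y = y := hgK
  have : y (g⁻¹ * h) = y h := by
    conv_rhs => rw [← this]
    rfl
  rw [hy1, hy2] at this
  exact hh this
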